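/- In the low temperature regime with parameters k and c (k, c > 0), for every a with 0 < a < 2k − 1 there exist a constant C₄ > 0 and L₀ such that for all L ≥ L₀, P(T = S < ∞) ≤ C₄ L^{−(4k−2)+2a}; that is, with high probability the first atypical uniform number occurs at a single site only. -/

import Mathlib

open Real Filter MeasureTheory ProbabilityTheory

noncomputable section

/-- A site of the 2d discrete torus `(ℤ/Lℤ)²`. -/
abbrev Site (L : ℕ) := ZMod L × ZMod L

/-- `ε_L = e^{−2J+q}/(2 cosh(2J−q))` with `J = k log L`, `q = c (log L)/L`. -/
def epsL (L : ℕ) (k c : ℝ) : ℝ :=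
  Real.exp (-(2 * (k * Real.log L)) + c * Real.log L / L) /
    (2 * Real.cosh (2 * (k * Real.log L) - c * Real.log L / L))

/-- The uniform number `U_x(n)` is *typical* if it lies in `(ε_L, 1 − ε_L)`. -/
def typical (L : ℕ) (k c : ℝ) (u : ℝ) : Prop :=
  u ∈ Set.Ioo (epsL L k c) (1 - epsL L k c)

/-- Key elementary bound: if `0 ≤ t ≤ 1` and `M*t ≤ 1` then `M*t/2 ≤ 1 - (1-t)^M`. -/
lemma aux_one_sub_pow {t : ℝ} (M : ℕ) (ht0 : 0 ≤ t) (ht1 : t ≤ 1)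
    (hMt : (M : ℝ) * t ≤ 1) : (M : ℝ) * t / 2 ≤ 1 - (1 - t) ^ M := by
  set s : ℝ := (M : ℝ) * t with hs
  have hs0 : 0 ≤ s := by positivity
  have hu0 : (0:ℝ) ≤ (1 - t) ^ M := pow_nonneg (by linarith) M
  have hu1 : (1 - t) ^ M ≤ 1 := pow_le_one₀ (by linarith) (by linarith)
  -- (1-t)^M * (1+t)^M ≤ 1
  have hprod : (1 - t) ^ M * (1 + t) ^ M ≤ 1 := by
    rw [← mul_pow]
    have : (1 - t) * (1 + t) = 1 - t ^ 2 := by ring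
    rw [this]
    exact pow_le_one₀ (by nlinarith) (by nlinarith)
  have hbern : 1 + s ≤ (1 + t) ^ M := by
    have := one_add_mul_le_pow (a := t) (by linarith) M
    rw [hs]; linarith [this]
  have hkey : (1 - t) ^ M * (1 + s) ≤ 1 := by
    calc (1 - t) ^ M * (1 + s) ≤ (1 - t) ^ M * (1 + t) ^ M :=
          mul_le_mul_of_nonneg_left hbern hu0
      _ ≤ 1 := hprod
  nlinarith [mul_nonneg (sub_nonneg.2 hu1) (sub_nonneg.2 hMt)]

set_option maxHeartbeats 1000000 in
/-- In the low temperature regime with parameters `k, c > 0`, for every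
`0 < a < 2k − 1` there are `C₄ > 0` and `L₀` such that for all `L ≥ L₀` and any family
`(U_x(n))_{x∈Λ,n≥1}` of i.i.d. uniform random variables on `(0,1)`, the probability that
at the first time carrying an atypical uniform number at least two distinct sites are
simultaneously atypical (i.e. that `T = S < ∞`) is at most `C₄ L^{−(4k−2)+2a}`. -/
theorem stmt17 (k c : ℝ) (hk : 0 < k) (hc : 0 < c) :
    ∀ a : ℝ, 0 < a → a < 2 * k - 1 → ∃ C₄ > (0:ℝ), ∃ L₀ : ℕ, ∀ L : ℕ, L₀ ≤ L → 2 ≤ L →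
      ∀ (Ω : Type) (_ : MeasurableSpace Ω) (μ : Measure Ω)
        (_ : IsProbabilityMeasure μ) (U : Site L × ℕ → Ω → ℝ),
        (∀ i, Measurable (U i)) →
        iIndepFun U μ →
        (∀ i, μ.map (U i) = volume.restrict (Set.Ioo (0:ℝ) 1)) →
        μ {ω | ∃ n : ℕ, 1 ≤ n ∧
            (∀ m : ℕ, 1 ≤ m → m < n → ∀ x : Site L, typical L k c (U (x, m) ω)) ∧
            ∃ x y : Site L, x ≠ y ∧
              ¬ typical L k c (U (x, n) ω) ∧ ¬ typical L k c (U (y, n) ω)}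
          ≤ ENNReal.ofReal (C₄ * (L : ℝ) ^ (-(4 * k - 2) + 2 * a)) := by
  intro a ha0 ha1
  have hk2 : 1 < 2 * k := by linarith
  refine ⟨4 * Real.exp (2 * c), by positivity, ?_⟩
  -- choose L₀ so that two asymptotic conditions hold
  have hev1 : ∀ᶠ L : ℕ in atTop, c / (L : ℝ) < 2 * k :=
    (tendsto_const_div_atTop_nhds_zero_nat c).eventually_lt_const (by linarith)
  have hev2 : ∀ᶠ L : ℕ in atTop, 2 * Real.exp (2 * c) * (L : ℝ) ^ ((2:ℝ) - 4 * k) ≤ 1 := by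
    have h0 : Tendsto (fun L : ℕ => 2 * Real.exp (2 * c) * (L : ℝ) ^ ((2:ℝ) - 4 * k))
        atTop (nhds 0) := by
      have h1 : Tendsto (fun x : ℝ => x ^ ((2:ℝ) - 4 * k)) atTop (nhds 0) := by
        have : ((2:ℝ) - 4 * k) = -(4 * k - 2) := by ring
        rw [this]
        exact tendsto_rpow_neg_atTop (by linarith)
      have h2 := (h1.comp tendsto_natCast_atTop_atTop).const_mul
        (2 * Real.exp (2 * c))
      simpa using h2
    exact h0.eventually_le_const one_pos
  obtain ⟨L₀, hL₀⟩ := (hev1.and hev2).exists_forall_of_atTop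
  refine ⟨L₀, ?_⟩
  intro L hLL hL2 Ω mΩ μ hμ U hUmeas hind hmap
  haveI : NeZero L := ⟨by omega⟩
  obtain ⟨hcond1, hcond2⟩ := hL₀ L hLL
  -- basic facts on ε
  set ε := epsL L k c with hεdef
  have hL0R : (0:ℝ) < L := by positivity
  have hL1R : (1:ℝ) ≤ L := by exact_mod_cast Nat.one_le_of_lt hL2
  have hlogL : 0 < Real.log L := Real.log_pos (by exact_mod_cast hL2)
  set A : ℝ := 2 * (k * Real.log L) - c * Real.log L / L with hAdef
  have hA : 0 < A := by
    have : A = Real.log L * (2 * k - c / L) := by rw [hAdef]; field_simp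
    rw [this]
    exact mul_pos hlogL (by linarith)
  have hεeq : ε = Real.exp (-A) / (Real.exp A + Real.exp (-A)) := by
    rw [hεdef]
    unfold epsL
    rw [Real.cosh_eq]
    rw [show -(2 * (k * Real.log L)) + c * Real.log L / L = -A by rw [hAdef]; ring]
    rw [show 2 * ((Real.exp A + Real.exp (-A)) / 2) = Real.exp A + Real.exp (-A) by ring]
  have hden : 0 < Real.exp A + Real.exp (-A) := by positivity
  have hε0 : 0 < ε := by rw [hεeq]; positivity
  have hεhalf : ε < 1 / 2 := by
    rw [hεeq, div_lt_div_iff₀ hden (by norm_num : (0:ℝ) < 2)]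
    have : Real.exp (-A) < Real.exp A := Real.exp_lt_exp.2 (by linarith)
    linarith
  have hεle : ε ≤ Real.exp (2 * c) * (L : ℝ) ^ (-(4 * k) : ℝ) := by
    have h1 : ε ≤ Real.exp (-A) / Real.exp A := by
      rw [hεeq]
      apply div_le_div_of_nonneg_left (Real.exp_pos _).le (Real.exp_pos _)
      linarith [(Real.exp_pos (-A)).le]
    have h2 : Real.exp (-A) / Real.exp A = Real.exp (-(2*A)) := by
      rw [← Real.exp_sub]; ring_nf
    have h3 : Real.exp (-(2*A)) ≤ Real.exp (2 * c) * (L : ℝ) ^ (-(4 * k) : ℝ) := by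
      have hrw : (L : ℝ) ^ (-(4 * k) : ℝ) = Real.exp (-(4 * k) * Real.log L) := by
        rw [Real.rpow_def_of_pos hL0R]; ring_nf
      rw [hrw, ← Real.exp_add]
      apply Real.exp_le_exp.2
      have hlogdiv : Real.log L / L ≤ 1 := by
        rw [div_le_one hL0R]
        linarith [Real.log_le_sub_one_of_pos hL0R]
      have : -(2*A) = -(4*k) * Real.log L + 2 * (c * (Real.log L / L)) := by
        rw [hAdef]; field_simp; ring
      rw [this]
      have : c * (Real.log L / L) ≤ c := by
        nlinarith [hlogdiv, hc.le, div_nonneg hlogL.le hL0R.le]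
      linarith
    calc ε ≤ Real.exp (-A) / Real.exp A := h1
      _ = Real.exp (-(2*A)) := h2
      _ ≤ _ := h3
  -- the smallness condition: (L:ℝ)^2 * (2ε) ≤ 1
  have hsmall : (L : ℝ) ^ 2 * (2 * ε) ≤ 1 := by
    have h1 : (L : ℝ) ^ 2 * (2 * ε) ≤ 2 * Real.exp (2*c) * ((L:ℝ)^2 * (L:ℝ) ^ (-(4*k):ℝ)) := by
      nlinarith [hεle, sq_nonneg (L:ℝ), Real.exp_pos (2*c), hε0]
    have h2 : (L:ℝ)^2 * (L:ℝ) ^ (-(4*k):ℝ) = (L:ℝ) ^ ((2:ℝ) - 4*k) := by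
      rw [show ((2:ℝ) - 4*k) = (2:ℝ) + (-(4*k)) by ring, Real.rpow_add hL0R,
        Real.rpow_two]
    rw [h2] at h1
    calc (L : ℝ) ^ 2 * (2 * ε) ≤ 2 * Real.exp (2*c) * (L:ℝ) ^ ((2:ℝ) - 4*k) := h1
      _ ≤ 1 := hcond2
  -- measure of single-site events
  set Tset : Set ℝ := Set.Ioo ε (1 - ε) with hTdef
  have hTm : MeasurableSet Tset := measurableSet_Ioo
  have hTsub : Tset ⊆ Set.Ioo (0:ℝ) 1 := by
    intro u hu
    obtain ⟨h1, h2⟩ := hu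
    exact ⟨by linarith, by linarith⟩
  have hmeas1 : ∀ i, μ (U i ⁻¹' Tset) = ENNReal.ofReal (1 - 2 * ε) := by
    intro i
    rw [← Measure.map_apply (hUmeas i) hTm, hmap i, Measure.restrict_apply hTm,
      Set.inter_eq_self_of_subset_left hTsub, hTdef, Real.volume_Ioo]
    rw [show (1:ℝ) - ε - ε = 1 - 2 * ε by ring]
  have hmeas2 : ∀ i, μ (U i ⁻¹' Tsetᶜ) = ENNReal.ofReal (2 * ε) := by
    intro i
    rw [Set.preimage_compl, prob_compl_eq_one_sub (hTm.preimage (hUmeas i)), hmeas1 i]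
    rw [← ENNReal.ofReal_one, ← ENNReal.ofReal_sub _ (by linarith : (0:ℝ) ≤ 1 - 2*ε)]
    rw [show (1:ℝ) - (1 - 2 * ε) = 2 * ε by ring]
  set r : ENNReal := ENNReal.ofReal (1 - 2 * ε) with hrdef
  set pp : ENNReal := ENNReal.ofReal (2 * ε) with hppdef
  -- the cylinder events
  have hM : Fintype.card (Site L) = L * L := by
    rw [Fintype.card_prod, ZMod.card]
  -- measure of the cylinder event for a fixed pair and time
  have hD : ∀ (j : ℕ) (x y : Site L), x ≠ y →
      μ (⋂ i ∈ ((Finset.univ ×ˢ Finset.Ico 1 (j+1)) ∪ {(x, j+1), (y, j+1)} :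
          Finset (Site L × ℕ)),
        U i ⁻¹' (if i.2 = j + 1 then Tsetᶜ else Tset)) = r ^ (L * L * j) * (pp * pp) := by
    intro j x y hxy
    have hkey := hind.measure_inter_preimage_eq_mul
      ((Finset.univ ×ˢ Finset.Ico 1 (j+1)) ∪ {(x, j+1), (y, j+1)})
      (sets := fun i => if i.2 = j + 1 then Tsetᶜ else Tset)
      (fun i _ => by split <;> [exact hTm.compl; exact hTm])
    rw [hkey]
    have hdisj : Disjoint ((Finset.univ ×ˢ Finset.Ico 1 (j+1)) : Finset (Site L × ℕ))
        {(x, j+1), (y, j+1)} := by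
      rw [Finset.disjoint_left]
      rintro ⟨z, m⟩ hz hz'
      simp only [Finset.mem_product, Finset.mem_Ico] at hz
      simp only [Finset.mem_insert, Finset.mem_singleton, Prod.mk.injEq] at hz'
      omega
    rw [Finset.prod_union hdisj]
    have h1 : ∏ i ∈ ((Finset.univ ×ˢ Finset.Ico 1 (j+1)) : Finset (Site L × ℕ)),
        μ (U i ⁻¹' (if i.2 = j + 1 then Tsetᶜ else Tset)) = r ^ (L * L * j) := by
      have hc : ∀ i ∈ ((Finset.univ ×ˢ Finset.Ico 1 (j+1)) : Finset (Site L × ℕ)),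
          μ (U i ⁻¹' (if i.2 = j + 1 then Tsetᶜ else Tset)) = r := by
        intro i hi
        simp only [Finset.mem_product, Finset.mem_Ico] at hi
        rw [if_neg (by omega), hmeas1]
      rw [Finset.prod_congr rfl hc, Finset.prod_const, Finset.card_product,
        Finset.card_univ, hM, Nat.card_Ico]
      congr 1
    have h2 : ∏ i ∈ ({(x, j+1), (y, j+1)} : Finset (Site L × ℕ)),
        μ (U i ⁻¹' (if i.2 = j + 1 then Tsetᶜ else Tset)) = pp * pp := by
      rw [Finset.prod_pair (by simp [hxy])]
      have h2' : ∀ i : Site L × ℕ, μ ((U i ⁻¹' Tset)ᶜ) = pp := fun i => hmeas2 i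
      simp [h2']
    rw [h1, h2]
  -- the union bound over times and pairs
  set E : ℕ → Set Ω := fun j => {ω | (∀ m : ℕ, 1 ≤ m → m < j + 1 →
      ∀ z : Site L, U (z, m) ω ∈ Tset) ∧
      ∃ x y : Site L, x ≠ y ∧ U (x, j+1) ω ∈ Tsetᶜ ∧ U (y, j+1) ω ∈ Tsetᶜ} with hEdef
  have hincl : {ω | ∃ n : ℕ, 1 ≤ n ∧
      (∀ m : ℕ, 1 ≤ m → m < n → ∀ x : Site L, typical L k c (U (x, m) ω)) ∧
      ∃ x y : Site L, x ≠ y ∧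
        ¬ typical L k c (U (x, n) ω) ∧ ¬ typical L k c (U (y, n) ω)} ⊆ ⋃ j, E j := by
    rintro ω ⟨n, hn1, hall, x, y, hxy, hx, hy⟩
    obtain ⟨j, rfl⟩ : ∃ j, n = j + 1 := ⟨n - 1, by omega⟩
    refine Set.mem_iUnion.2 ⟨j, ?_, x, y, hxy, hx, hy⟩
    intro m hm1 hm2 z
    exact hall m hm1 hm2 z
  have hEbound : ∀ j : ℕ, μ (E j) ≤ ((L^4 : ℕ) : ENNReal) * (pp * pp) * (r ^ (L*L)) ^ j := by
    intro j
    have hsub : E j ⊆ ⋃ z ∈ (Finset.univ : Finset (Site L × Site L)).filter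
        (fun z => z.1 ≠ z.2), ⋂ i ∈ ((Finset.univ ×ˢ Finset.Ico 1 (j+1)) ∪
          {(z.1, j+1), (z.2, j+1)} : Finset (Site L × ℕ)),
        U i ⁻¹' (if i.2 = j + 1 then Tsetᶜ else Tset) := by
      rintro ω ⟨hall, x, y, hxy, hx, hy⟩
      refine Set.mem_iUnion₂.2 ⟨(x, y), by simp [hxy], ?_⟩
      refine Set.mem_iInter₂.2 ?_
      rintro ⟨z, m⟩ hi
      rcases Finset.mem_union.1 hi with h | h
      · simp only [Finset.mem_product, Finset.mem_Ico] at h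
        rw [if_neg (by omega)]
        exact hall m h.2.1 h.2.2 z
      · simp only [Finset.mem_insert, Finset.mem_singleton, Prod.mk.injEq] at h
        rcases h with ⟨rfl, rfl⟩ | ⟨rfl, rfl⟩
        · simpa using hx
        · simpa using hy
    calc μ (E j) ≤ _ := measure_mono hsub
      _ ≤ ∑ z ∈ (Finset.univ : Finset (Site L × Site L)).filter (fun z => z.1 ≠ z.2),
            μ (⋂ i ∈ ((Finset.univ ×ˢ Finset.Ico 1 (j+1)) ∪
              {(z.1, j+1), (z.2, j+1)} : Finset (Site L × ℕ)),
            U i ⁻¹' (if i.2 = j + 1 then Tsetᶜ else Tset)) := measure_biUnion_finset_le _ _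
      _ = ∑ z ∈ (Finset.univ : Finset (Site L × Site L)).filter (fun z => z.1 ≠ z.2),
            r ^ (L * L * j) * (pp * pp) := by
          refine Finset.sum_congr rfl ?_
          rintro ⟨x, y⟩ hz
          simp only [Finset.mem_filter] at hz
          exact hD j x y hz.2
      _ = (((Finset.univ : Finset (Site L × Site L)).filter (fun z => z.1 ≠ z.2)).card : ENNReal)
            * (r ^ (L * L * j) * (pp * pp)) := by
          rw [Finset.sum_const, nsmul_eq_mul]
      _ ≤ ((L^4 : ℕ) : ENNReal) * (pp * pp) * (r ^ (L*L)) ^ j := by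
          rw [pow_mul, show (r ^ (L*L)) ^ j * (pp * pp) = (pp * pp) * (r ^ (L*L)) ^ j
            from mul_comm _ _, ← mul_assoc]
          apply mul_le_mul_left
          apply mul_le_mul_left
          apply Nat.cast_le.2
          calc ((Finset.univ : Finset (Site L × Site L)).filter (fun z => z.1 ≠ z.2)).card
              ≤ (Finset.univ : Finset (Site L × Site L)).card := Finset.card_filter_le _ _
            _ = L^4 := by
                rw [Finset.card_univ, Fintype.card_prod, hM]; ring
  -- sum over times
  have htsum : μ {ω | ∃ n : ℕ, 1 ≤ n ∧
      (∀ m : ℕ, 1 ≤ m → m < n → ∀ x : Site L, typical L k c (U (x, m) ω)) ∧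
      ∃ x y : Site L, x ≠ y ∧
        ¬ typical L k c (U (x, n) ω) ∧ ¬ typical L k c (U (y, n) ω)}
      ≤ ((L^4 : ℕ) : ENNReal) * (pp * pp) * (1 - r ^ (L*L))⁻¹ := by
    calc μ _ ≤ μ (⋃ j, E j) := measure_mono hincl
      _ ≤ ∑' j, μ (E j) := measure_iUnion_le E
      _ ≤ ∑' j, ((L^4 : ℕ) : ENNReal) * (pp * pp) * (r ^ (L*L)) ^ j :=
          ENNReal.tsum_le_tsum hEbound
      _ = ((L^4 : ℕ) : ENNReal) * (pp * pp) * ∑' j, (r ^ (L*L)) ^ j :=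
          ENNReal.tsum_mul_left
      _ = ((L^4 : ℕ) : ENNReal) * (pp * pp) * (1 - r ^ (L*L))⁻¹ := by
          rw [ENNReal.tsum_geometric]
  refine htsum.trans ?_
  -- now a purely numeric ENNReal estimate
  have h2ε0 : (0:ℝ) ≤ 1 - 2 * ε := by linarith
  have hrpow : r ^ (L*L) = ENNReal.ofReal ((1 - 2*ε) ^ (L*L)) := by
    rw [hrdef, ← ENNReal.ofReal_pow h2ε0]
  have hβpos : (0:ℝ) < (L:ℝ)^2 * ε := by positivity
  have hlow : (L:ℝ)^2 * ε ≤ 1 - (1 - 2*ε) ^ (L*L) := by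
    have := aux_one_sub_pow (t := 2*ε) (L*L) (by linarith) (by linarith)
      (by push_cast; nlinarith [hsmall])
    have hcast : ((L*L : ℕ) : ℝ) = (L:ℝ)^2 := by push_cast; ring
    rw [hcast] at this
    nlinarith [this]
  have hone : (1 : ENNReal) - r ^ (L*L) = ENNReal.ofReal (1 - (1 - 2*ε) ^ (L*L)) := by
    rw [hrpow, ← ENNReal.ofReal_one,
      ← ENNReal.ofReal_sub _ (pow_nonneg h2ε0 _)]
  have hinv : (1 - r ^ (L*L))⁻¹ ≤ ENNReal.ofReal (((L:ℝ)^2 * ε)⁻¹) := by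
    rw [hone, ENNReal.ofReal_inv_of_pos hβpos]
    exact ENNReal.inv_le_inv' (ENNReal.ofReal_le_ofReal hlow)
  calc ((L^4 : ℕ) : ENNReal) * (pp * pp) * (1 - r ^ (L*L))⁻¹
      ≤ ENNReal.ofReal ((L:ℝ)^4) * ENNReal.ofReal ((2*ε) * (2*ε))
        * ENNReal.ofReal (((L:ℝ)^2 * ε)⁻¹) := by
        apply mul_le_mul' (mul_le_mul' ?_ ?_) hinv
        · rw [← ENNReal.ofReal_natCast (L^4)]
          exact ENNReal.ofReal_le_ofReal (by push_cast; exact le_rfl)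
        · rw [hppdef, ← ENNReal.ofReal_mul (by linarith)]
    _ = ENNReal.ofReal ((L:ℝ)^4 * ((2*ε) * (2*ε)) * ((L:ℝ)^2 * ε)⁻¹) := by
        rw [← ENNReal.ofReal_mul (by positivity), ← ENNReal.ofReal_mul (by positivity)]
    _ ≤ ENNReal.ofReal (4 * Real.exp (2 * c) * (L : ℝ) ^ (-(4 * k - 2) + 2 * a)) := by
        apply ENNReal.ofReal_le_ofReal
        have hLHS : (L:ℝ)^4 * ((2*ε) * (2*ε)) * ((L:ℝ)^2 * ε)⁻¹ = 4 * (L:ℝ)^2 * ε := by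
          field_simp
          ring
        rw [hLHS]
        have hpow2 : (L:ℝ)^2 * (L:ℝ) ^ (-(4*k):ℝ) = (L:ℝ) ^ ((2:ℝ) - 4*k) := by
          rw [show ((2:ℝ) - 4*k) = (2:ℝ) + (-(4*k)) by ring, Real.rpow_add hL0R,
            Real.rpow_two]
        have hexp : (L:ℝ) ^ ((2:ℝ) - 4*k) ≤ (L:ℝ) ^ (-(4 * k - 2) + 2 * a) :=
          Real.rpow_le_rpow_of_exponent_le hL1R (by linarith)
        calc 4 * (L:ℝ)^2 * ε ≤ 4 * (L:ℝ)^2 * (Real.exp (2*c) * (L:ℝ) ^ (-(4*k):ℝ)) := by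
              apply mul_le_mul_of_nonneg_left hεle (by positivity)
          _ = 4 * Real.exp (2*c) * ((L:ℝ)^2 * (L:ℝ) ^ (-(4*k):ℝ)) := by ring
          _ = 4 * Real.exp (2*c) * (L:ℝ) ^ ((2:ℝ) - 4*k) := by rw [hpow2]
          _ ≤ 4 * Real.exp (2*c) * (L:ℝ) ^ (-(4 * k - 2) + 2 * a) := by
              apply mul_le_mul_of_nonneg_left hexp (by positivity)
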